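/- Let (𝒮, 𝒦) be a C²KA without reactivation in which the deactivation stimulus 𝔡 is not a basic stimulus, 𝒞 a system of communicating agents over it, and R a dependence relation on K. Let I ∈ 𝒞 be the idle agent, beh(I) = 1. Then for every agent A ∈ 𝒞 with A ≠ I, pfcD(A, I) does not hold. -/
import Mathlib


/-- A Communicating Concurrent Kleene Algebra (C²KA): a stimulus structure
(idempotent semiring with absorbing `ds`), a concurrent Kleene algebra
(two Kleene algebras over a common idempotent additive structure linked by the
exchange axiom), and the two semimodule actions `act` and `lam`. -/
structure C2KA (S K : Type) where
  splus : S → S → S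
  sdot : S → S → S
  ds : S
  ns : S
  splus_assoc : ∀ a b c, splus (splus a b) c = splus a (splus b c)
  splus_comm : ∀ a b, splus a b = splus b a
  splus_idem : ∀ a, splus a a = a
  splus_ident : ∀ a, splus ds a = a
  sdot_assoc : ∀ a b c, sdot (sdot a b) c = sdot a (sdot b c)
  sdot_ident_left : ∀ a, sdot ns a = a
  sdot_ident_right : ∀ a, sdot a ns = a
  sdot_distrib_left : ∀ a b c, sdot a (splus b c) = splus (sdot a b) (sdot a c)
  sdot_distrib_right : ∀ a b c, sdot (splus a b) c = splus (sdot a c) (sdot b c)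
  ds_absorb_left : ∀ a, sdot ds a = ds
  ds_absorb_right : ∀ a, sdot a ds = ds
  kplus : K → K → K
  kpar : K → K → K
  kseq : K → K → K
  kiterPar : K → K
  kiterSeq : K → K
  kzero : K
  kone : K
  kplus_assoc : ∀ a b c, kplus (kplus a b) c = kplus a (kplus b c)
  kplus_comm : ∀ a b, kplus a b = kplus b a
  kplus_idem : ∀ a, kplus a a = a
  kplus_ident : ∀ a, kplus kzero a = a
  kpar_assoc : ∀ a b c, kpar (kpar a b) c = kpar a (kpar b c)
  kpar_ident_left : ∀ a, kpar kone a = a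
  kpar_ident_right : ∀ a, kpar a kone = a
  kpar_distrib_left : ∀ a b c, kpar a (kplus b c) = kplus (kpar a b) (kpar a c)
  kpar_distrib_right : ∀ a b c, kpar (kplus a b) c = kplus (kpar a c) (kpar b c)
  kpar_zero_left : ∀ a, kpar kzero a = kzero
  kpar_zero_right : ∀ a, kpar a kzero = kzero
  kseq_assoc : ∀ a b c, kseq (kseq a b) c = kseq a (kseq b c)
  kseq_ident_left : ∀ a, kseq kone a = a
  kseq_ident_right : ∀ a, kseq a kone = a
  kseq_distrib_left : ∀ a b c, kseq a (kplus b c) = kplus (kseq a b) (kseq a c)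
  kseq_distrib_right : ∀ a b c, kseq (kplus a b) c = kplus (kseq a c) (kseq b c)
  kseq_zero_left : ∀ a, kseq kzero a = kzero
  kseq_zero_right : ∀ a, kseq a kzero = kzero
  kiterPar_unfold : ∀ a, kplus (kplus kone (kpar a (kiterPar a))) (kiterPar a) = kiterPar a
  kiterPar_ind_left : ∀ a b x, kplus (kplus b (kpar a x)) x = x → kplus (kpar (kiterPar a) b) x = x
  kiterPar_ind_right : ∀ a b x, kplus (kplus b (kpar x a)) x = x → kplus (kpar b (kiterPar a)) x = x
  kiterSeq_unfold : ∀ a, kplus (kplus kone (kseq a (kiterSeq a))) (kiterSeq a) = kiterSeq a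
  kiterSeq_ind_left : ∀ a b x, kplus (kplus b (kseq a x)) x = x → kplus (kseq (kiterSeq a) b) x = x
  kiterSeq_ind_right : ∀ a b x, kplus (kplus b (kseq x a)) x = x → kplus (kseq b (kiterSeq a)) x = x
  exchange : ∀ a b c d,
    kplus (kseq (kpar a b) (kpar c d)) (kpar (kseq b c) (kseq a d)) = kpar (kseq b c) (kseq a d)
  act : S → K → K
  lam : K → S → S
  act_kplus : ∀ s a b, act s (kplus a b) = kplus (act s a) (act s b)
  act_splus : ∀ s t a, act (splus s t) a = kplus (act s a) (act t a)
  act_sdot : ∀ s t a, act (sdot s t) a = act s (act t a)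
  act_ns : ∀ a, act ns a = a
  act_ds : ∀ a, act ds a = kzero
  lam_splus : ∀ a s t, lam a (splus s t) = splus (lam a s) (lam a t)
  lam_kplus : ∀ a b s, lam (kplus a b) s = splus (lam a s) (lam b s)
  lam_kone : ∀ s, lam kone s = s
  lam_kzero : ∀ s, lam kzero s = ds
  act_kseq : ∀ s a b, act s (kseq a b) = kseq (act s a) (act (lam a s) b)
  cascade : ∀ s a b c, kplus c a = a ∨ kseq (act s a) (act (lam c s) b) = kzero
  lam_sdot : ∀ a s t, lam a (sdot s t) = sdot (lam (act t a) s) (lam a t)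

namespace C2KA

variable {S K A : Type}

/-- The natural order on stimuli: `s ≤_S t` iff `s ⊕ t = t`. -/
def sle (C : C2KA S K) (s t : S) : Prop := C.splus s t = t

/-- The natural order on behaviours: `a ≤_K b` iff `a + b = b`. -/
def kle (C : C2KA S K) (a b : K) : Prop := C.kplus a b = b

/-- Division of stimuli: `x ∣ y` iff `∃ z, y = x ⊙ z`. -/
def sdiv (C : C2KA S K) (x y : S) : Prop := ∃ z, y = C.sdot x z

/-- Basic stimuli: indivisible with respect to `⊙`. -/
def basic (C : C2KA S K) (s : S) : Prop :=
  (∀ t, C.sdiv t s → t = C.ns ∨ t = s) ∧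
  (∀ t r, C.sdiv s (C.sdot t r) → C.sdiv s t ∨ C.sdiv s r)

/-- A fixed point behaviour: fixed by every stimulus other than `𝔡`. -/
def fixedPoint (C : C2KA S K) (a : K) : Prop := ∀ s, s ≠ C.ds → C.act s a = a

/-- A C²KA is without reactivation iff `s ∘ 1 = 1` for every `s ≠ 𝔡`. -/
def withoutReactivation (C : C2KA S K) : Prop := ∀ s, s ≠ C.ds → C.act s C.kone = C.kone

/-- The orbit of a behaviour `a`: all behavioural responses of `a` to stimuli. -/
def orb (C : C2KA S K) (a : K) : Set K := {b | ∃ s, C.act s a = b}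

/-- A dependence relation on `K`: bilinear, with `0` and `1` depending on
nothing and nothing depending on them. -/
def IsDependence (C : C2KA S K) (R : K → K → Prop) : Prop :=
  (∀ a b c, R c (C.kplus a b) ↔ (R c a ∨ R c b)) ∧
  (∀ a b c, R (C.kplus b c) a ↔ (R b a ∨ R c a)) ∧
  (∀ a, ¬ R C.kzero a) ∧ (∀ a, ¬ R a C.kzero) ∧
  (∀ a, ¬ R C.kone a) ∧ (∀ a, ¬ R a C.kone)

/-- Potential for direct communication via external stimuli: `P →_S Q` iff
`P ≠ Q` and there are basic stimuli `s, t` with `t ≤_S λ(beh P, s)` and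
`t ∘ beh Q ≠ beh Q`. -/
def commD (C : C2KA S K) (beh : A → K) (P Q : A) : Prop :=
  P ≠ Q ∧ ∃ s t, C.basic s ∧ C.basic t ∧ C.sle t (C.lam (beh P) s) ∧
    C.act t (beh Q) ≠ beh Q

/-- Potential for communication via external stimuli using at most `n` basic
stimuli (`n ≥ 1`). -/
def commN (C : C2KA S K) (beh : A → K) : ℕ → A → A → Prop
  | 0, _, _ => False
  | 1, P, Q => commD C beh P Q
  | n + 2, P, Q => ∃ W, W ≠ P ∧ W ≠ Q ∧ commN C beh (n + 1) P W ∧ commD C beh W Q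

/-- Potential for communication via external stimuli: `P →→ Q`. -/
def comm (C : C2KA S K) (beh : A → K) (P Q : A) : Prop :=
  ∃ n, 1 ≤ n ∧ commN C beh n P Q

/-- A system is stimuli-connected iff every partition of it into two nonempty
parts admits a potential communication via external stimuli across the parts. -/
def stimuliConnected (C : C2KA S K) (beh : A → K) : Prop :=
  ∀ X₁ X₂ : Set A, X₁.Nonempty → X₂.Nonempty → X₁ ∩ X₂ = ∅ → X₁ ∪ X₂ = Set.univ →
    ∃ P ∈ X₁, ∃ Q ∈ X₂, comm C beh P Q ∨ comm C beh Q P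

/-- A universally influential agent: `A →→ B` for every other agent `B`. -/
def universallyInfluential (C : C2KA S K) (beh : A → K) (P : A) : Prop :=
  ∀ Q, Q ≠ P → comm C beh P Q

/-- A communication fixed point: `¬ (A →→ B)` for every other agent `B`. -/
def commFixedPoint (C : C2KA S K) (beh : A → K) (P : A) : Prop :=
  ∀ Q, Q ≠ P → ¬ comm C beh P Q

/-- Potential for direct communication via shared environments:
`P →_E Q` iff `P ≠ Q` and `beh Q R beh P`. -/
def envCommD (C : C2KA S K) (beh : A → K) (R : K → K → Prop) (P Q : A) : Prop :=
  P ≠ Q ∧ R (beh Q) (beh P)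

/-- Potential for direct communication: via external stimuli or via shared
environments. -/
def pfcD (C : C2KA S K) (beh : A → K) (R : K → K → Prop) (P Q : A) : Prop :=
  commD C beh P Q ∨ envCommD C beh R P Q

/-- Potential for communication: the inductive closure of `pfcD` through
intermediate agents. -/
inductive pfc (C : C2KA S K) (beh : A → K) (R : K → K → Prop) : A → A → Prop
  | direct : ∀ {P Q : A}, pfcD C beh R P Q → pfc C beh R P Q
  | step : ∀ {P W Q : A}, pfcD C beh R P W → pfc C beh R W Q → pfc C beh R P Q

end C2KA

/-- In a C²KA without reactivation in which `𝔡` is not basic, no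
agent has the potential for direct communication with the idle agent. -/
theorem stmt_9 {S K A : Type} (C : C2KA S K) (beh : A → K)
    (R : K → K → Prop) (hR : C2KA.IsDependence C R)
    (hwr : C2KA.withoutReactivation C) (hd : ¬ C2KA.basic C C.ds)
    (I : A) (hI : beh I = C.kone) :
    ∀ Ag : A, Ag ≠ I → ¬ C2KA.pfcD C beh R Ag I := by
  intro Ag hAg h
  rcases h with ⟨_, s, t, hs, ht, hle, hact⟩ | ⟨_, hRI⟩
  · apply hact
    rw [hI]
    apply hwr
    intro hds
    exact hd (hds ▸ ht)
  · rw [hI] at hRI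
    exact hR.2.2.2.2.1 _ hRI
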